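/- Let C be a rank 4 tensor with Weyl symmetries on an n-dimensional inner product space, and let C_p be the induced linear operator on the space of p-forms (2 ≤ p ≤ n-2). Then the trace of C_p is zero. -/

import Mathlib

/-- The matrix (in the standard coordinate basis of rank-`p` arrays, `p = k+2`) of the
Weyl operator `C_p` on `p`-forms:
`(C_p F)_{ν_1…ν_p} = C^{ρσ}_{[ν_1ν_2} F_{ν_3…ν_p]ρσ}`. -/
noncomputable def weylMat {n : ℕ} (η : Fin n → ℝ) (C : Fin n → Fin n → Fin n → Fin n → ℝ)
    (k : ℕ) : Matrix (Fin (k + 2) → Fin n) (Fin (k + 2) → Fin n) ℝ :=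
  fun ν κ => (Nat.factorial (k + 2) : ℝ)⁻¹ *
    ∑ σ : Equiv.Perm (Fin (k + 2)), ((Equiv.Perm.sign σ : ℤ) : ℝ) *
      ∑ ρ : Fin n, ∑ τ : Fin n,
        η ρ * η τ * C ρ τ (ν (σ ⟨0, by omega⟩)) (ν (σ ⟨1, by omega⟩)) *
          (if κ = (fun j : Fin (k + 2) => if h : (j : ℕ) < k then ν (σ ⟨(j : ℕ) + 2, by omega⟩)
              else if (j : ℕ) = k then ρ else τ) then 1 else 0)

open Relation

namespace Statement4Aux

/-- The "constraint" relation: positions are linked to their image under `α`,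
except at the two special positions `K`, `K'`. -/
def relA {I : Type*} (α : Equiv.Perm I) (K K' : I) : I → I → Prop :=
  fun a b => a ≠ K ∧ a ≠ K' ∧ b = α a

lemma eqvGen_chain {I : Type*} (α : Equiv.Perm I) (K K' j : I) :
    ∀ m : ℕ, 0 < m →
      (∀ i : ℕ, 0 < i → i < m → (α ^ i) j ≠ K ∧ (α ^ i) j ≠ K') →
      EqvGen (relA α K K') (α j) ((α ^ m) j) := by
  intro m
  induction m with
  | zero => omega
  | succ m ih =>
    intro _ hlt
    rcases Nat.eq_zero_or_pos m with hm | hm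
    · subst hm; simpa using EqvGen.refl (α j)
    · have h1 := ih hm (fun i hi0 him => hlt i hi0 (by omega))
      refine EqvGen.trans _ _ _ h1 (EqvGen.rel _ _ ?_)
      obtain ⟨h2, h3⟩ := hlt m hm (by omega)
      refine ⟨h2, h3, ?_⟩
      rw [pow_succ', Equiv.Perm.mul_apply]

lemma eqvGen_reach {I : Type*} [Finite I] (α : Equiv.Perm I) (K K' j : I)
    (hj : j = K ∨ j = K') :
    EqvGen (relA α K K') (α j) K ∨ EqvGen (relA α K K') (α j) K' := by
  classical
  have hex : ∃ m : ℕ, 0 < m ∧ ((α ^ m) j = K ∨ (α ^ m) j = K') :=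
    ⟨orderOf α, orderOf_pos α, by rw [pow_orderOf_eq_one]; simpa using hj⟩
  have hmin : ∀ i : ℕ, 0 < i → i < Nat.find hex → (α ^ i) j ≠ K ∧ (α ^ i) j ≠ K' := by
    intro i hi0 him
    have h := Nat.find_min hex him
    push_neg at h
    exact h hi0
  have hchain := eqvGen_chain α K K' j (Nat.find hex) (Nat.find_spec hex).1 hmin
  rcases (Nat.find_spec hex).2 with h | h
  · exact Or.inl (by rwa [h] at hchain)
  · exact Or.inr (by rwa [h] at hchain)

lemma sum_pi_eval_zero {Q : Type*} [Fintype Q] [DecidableEq Q] {n : ℕ} {a b : Q}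
    (hab : b ≠ a) (F : Fin n → Fin n → ℝ) (hF : ∀ y, ∑ x, F x y = 0) :
    ∑ μ : Q → Fin n, F (μ a) (μ b) = 0 := by
  rw [← Equiv.sum_comp (Equiv.funSplitAt a (Fin n)).symm (fun μ => F (μ a) (μ b)),
    Fintype.sum_prod_type, Finset.sum_comm]
  refine Finset.sum_eq_zero fun f _ => ?_
  simp only [Equiv.funSplitAt_symm_apply, dif_pos rfl, dif_neg hab]
  exact hF _

lemma sum_factor {I : Type*} [Fintype I] [DecidableEq I] {n : ℕ} (r : I → I → Prop)
    [DecidableEq (Quotient (EqvGen.setoid r))]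
    [DecidablePred fun ν : I → Fin n => ∀ i j, r i j → ν i = ν j]
    [Fintype (Quotient (EqvGen.setoid r))]
    (w : (I → Fin n) → ℝ) :
    ∑ ν ∈ Finset.univ.filter (fun ν : I → Fin n => ∀ i j, r i j → ν i = ν j), w ν
      = ∑ μ : Quotient (EqvGen.setoid r) → Fin n,
          w (fun i => μ (Quotient.mk (EqvGen.setoid r) i)) := by
  have key : ∀ (ν : I → Fin n), (∀ i j, r i j → ν i = ν j) →
      ∀ a b, EqvGen r a b → ν a = ν b := by
    intro ν hν a b h
    induction h with
    | rel a b h => exact hν a b h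
    | refl => rfl
    | symm a b _ ih => exact ih.symm
    | trans a b c _ _ h1 h2 => exact h1.trans h2
  refine Finset.sum_nbij'
    (fun ν (q : Quotient (EqvGen.setoid r)) => ν q.out)
    (fun μ i => μ (Quotient.mk (EqvGen.setoid r) i))
    (fun ν _ => Finset.mem_univ _) ?_ ?_ ?_ ?_
  · intro μ _
    refine Finset.mem_filter.2 ⟨Finset.mem_univ _, fun i j hij => ?_⟩
    exact congrArg μ (Quotient.sound (EqvGen.rel i j hij))
  · intro ν hν
    funext x
    exact key ν (Finset.mem_filter.1 hν).2 _ _ (@Quotient.mk_out _ (EqvGen.setoid r) x)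
  · intro μ _
    funext q
    simp [Quotient.out_eq]
  · intro ν hν
    congr 1
    funext x
    exact (key ν (Finset.mem_filter.1 hν).2 _ _ (@Quotient.mk_out _ (EqvGen.setoid r) x)).symm

/-- Key lemma: the sum over constrained functions of the Weyl-type weight vanishes. -/
lemma key {p n : ℕ} (η : Fin n → ℝ) (C : Fin n → Fin n → Fin n → Fin n → ℝ)
    (hC1 : ∀ a b c d, C a b c d = - C b a c d)
    (hC2 : ∀ a b c d, C a b c d = - C a b d c)
    (hC5 : ∀ b d, ∑ a, η a * C a b a d = 0)
    (α : Equiv.Perm (Fin p)) (K K' : Fin p)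
    [DecidablePred fun ν : Fin p → Fin n => ∀ i j, relA α K K' i j → ν i = ν j] :
    ∑ ν ∈ Finset.univ.filter (fun ν : Fin p → Fin n => ∀ i j, relA α K K' i j → ν i = ν j),
        η (ν K) * η (ν K') * C (ν K) (ν K') (ν (α K)) (ν (α K')) = 0 := by
  classical
  have hdiag1 : ∀ a c d, C a a c d = 0 := fun a c d => by have := hC1 a a c d; linarith
  have hdiag2 : ∀ a b c, C a b c c = 0 := fun a b c => by have := hC2 a b c c; linarith
  letI : DecidableEq (Quotient (EqvGen.setoid (relA α K K'))) := Classical.decEq _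
  letI : Fintype (Quotient (EqvGen.setoid (relA α K K'))) := Quotient.fintype _
  rw [sum_factor (relA α K K')
    (fun ν => η (ν K) * η (ν K') * C (ν K) (ν K') (ν (α K)) (ν (α K')))]
  have q1 : Quotient.mk (EqvGen.setoid (relA α K K')) (α K) = Quotient.mk _ K ∨
      Quotient.mk (EqvGen.setoid (relA α K K')) (α K) = Quotient.mk _ K' :=
    (eqvGen_reach α K K' K (Or.inl rfl)).imp Quotient.sound Quotient.sound
  have q2 : Quotient.mk (EqvGen.setoid (relA α K K')) (α K') = Quotient.mk _ K ∨
      Quotient.mk (EqvGen.setoid (relA α K K')) (α K') = Quotient.mk _ K' :=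
    (eqvGen_reach α K K' K' (Or.inr rfl)).imp Quotient.sound Quotient.sound
  by_cases hq : Quotient.mk (EqvGen.setoid (relA α K K')) K
      = Quotient.mk (EqvGen.setoid (relA α K K')) K'
  · refine Finset.sum_eq_zero fun μ _ => ?_
    simp only [hq, hdiag1, mul_zero]
  · have hne : Quotient.mk (EqvGen.setoid (relA α K K')) K'
        ≠ Quotient.mk (EqvGen.setoid (relA α K K')) K := fun h => hq h.symm
    rcases q1 with h1 | h1 <;> rcases q2 with h2 | h2
    · simp only [h1, h2]
      have hF : ∀ y, ∑ x, η x * η y * C x y x x = 0 :=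
        fun y => Finset.sum_eq_zero fun x _ => by rw [hdiag2 x y x, mul_zero]
      exact sum_pi_eval_zero hne _ hF
    · simp only [h1, h2]
      have hF : ∀ y, ∑ x, η x * η y * C x y x y = 0 := by
        intro y
        have hx : ∀ x, η x * η y * C x y x y = η y * (η x * C x y x y) := fun x => by ring
        rw [Finset.sum_congr rfl fun x _ => hx x, ← Finset.mul_sum, hC5 y y, mul_zero]
      exact sum_pi_eval_zero hne _ hF
    · simp only [h1, h2]
      have hF : ∀ y, ∑ x, η x * η y * C x y y x = 0 := by
        intro y
        have hx : ∀ x, η x * η y * C x y y x = -(η y * (η x * C x y x y)) := fun x => by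
          rw [hC2 x y y x]; ring
        rw [Finset.sum_congr rfl fun x _ => hx x, Finset.sum_neg_distrib, ← Finset.mul_sum,
          hC5 y y, mul_zero, neg_zero]
      exact sum_pi_eval_zero hne _ hF
    · simp only [h1, h2]
      have hF : ∀ y, ∑ x, η x * η y * C x y y y = 0 :=
        fun y => Finset.sum_eq_zero fun x _ => by rw [hdiag2 x y y, mul_zero]
      exact sum_pi_eval_zero hne _ hF

end Statement4Aux


namespace Statement4Aux

set_option maxHeartbeats 2000000 in
lemma per_sigma {n k : ℕ} (η : Fin n → ℝ) (C : Fin n → Fin n → Fin n → Fin n → ℝ)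
    (hC1 : ∀ a b c d, C a b c d = - C b a c d)
    (hC2 : ∀ a b c d, C a b c d = - C a b d c)
    (hC5 : ∀ b d, ∑ a, η a * C a b a d = 0)
    (σ : Equiv.Perm (Fin (k + 2))) :
    ∑ ν : Fin (k + 2) → Fin n, ∑ ρ : Fin n, ∑ τ : Fin n,
        η ρ * η τ * C ρ τ (ν (σ ⟨0, by omega⟩)) (ν (σ ⟨1, by omega⟩)) *
          (if ν = (fun j : Fin (k + 2) => if h : (j : ℕ) < k then ν (σ ⟨(j : ℕ) + 2, by omega⟩)
              else if (j : ℕ) = k then ρ else τ) then 1 else 0) = 0 := by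
  classical
  set α : Equiv.Perm (Fin (k + 2)) := σ * Equiv.addRight (2 : Fin (k + 2)) with hαdef
  have happ : ∀ j : Fin (k + 2), α j = σ (j + 2) := fun j => rfl
  have hval : ∀ j : Fin (k + 2), Fin.val (j + (2 : Fin (k + 2))) = ((j : ℕ) + 2) % (k + 2) := by
    intro j
    have h2 : ((2 : Fin (k + 2)) : ℕ) = 2 % (k + 2) := rfl
    rw [Fin.val_add, h2, Nat.add_mod_mod]
  have hα0 : α ⟨k, by omega⟩ = σ ⟨0, by omega⟩ := by
    rw [happ]; congr 1; apply Fin.ext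
    rw [hval]
    simp [Nat.mod_self]
  have hα1 : α ⟨k + 1, by omega⟩ = σ ⟨1, by omega⟩ := by
    rw [happ]; congr 1; apply Fin.ext
    rw [hval]
    show (k + 1 + 2) % (k + 2) = 1
    have h3 : k + 1 + 2 = (k + 2) + 1 := by ring
    rw [h3, Nat.add_mod_left]
    exact Nat.mod_eq_of_lt (by omega)
  have hαj : ∀ j : Fin (k + 2), ∀ hj : (j : ℕ) < k, α j = σ ⟨(j : ℕ) + 2, Nat.add_lt_add_right hj 2⟩ := by
    intro j hj
    rw [happ]; congr 1; apply Fin.ext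
    rw [hval]
    exact Nat.mod_eq_of_lt (by omega)
  have hiff : ∀ (ν : Fin (k + 2) → Fin n) (ρ τ : Fin n),
      (ν = fun j : Fin (k + 2) => if h : (j : ℕ) < k then ν (σ ⟨(j : ℕ) + 2, by omega⟩)
          else if (j : ℕ) = k then ρ else τ)
      ↔ ((∀ i j, relA α ⟨k, by omega⟩ ⟨k + 1, by omega⟩ i j → ν i = ν j) ∧
          ρ = ν ⟨k, by omega⟩ ∧ τ = ν ⟨k + 1, by omega⟩) := by
    intro ν ρ τ
    constructor
    · intro h
      refine ⟨?_, ?_, ?_⟩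
      · rintro i j ⟨hiK, hiK', rfl⟩
        have hi2 : (i : ℕ) < k + 2 := i.isLt
        have h1 : (i : ℕ) ≠ k := fun hh => hiK (Fin.ext hh)
        have h2 : (i : ℕ) ≠ k + 1 := fun hh => hiK' (Fin.ext hh)
        have hik : (i : ℕ) < k := by omega
        have hc := congrFun h i
        rw [hαj i hik]
        simpa [dif_pos hik] using hc
      · have hc := congrFun h (⟨k, by omega⟩ : Fin (k + 2))
        symm; simpa using hc
      · have hc := congrFun h (⟨k + 1, by omega⟩ : Fin (k + 2))
        symm; simpa using hc
    · rintro ⟨hcond, rfl, rfl⟩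
      funext j
      by_cases hj : (j : ℕ) < k
      · rw [dif_pos hj, ← hαj j hj]
        exact hcond j (α j) ⟨fun hh => by have := congrArg Fin.val hh; simp at this; omega,
          fun hh => by have := congrArg Fin.val hh; simp at this; omega, rfl⟩
      · by_cases hjk : (j : ℕ) = k
        · rw [dif_neg hj, if_pos hjk]
          congr 1
          exact Fin.ext hjk
        · rw [dif_neg hj, if_neg hjk]
          congr 1
          apply Fin.ext
          have := j.isLt
          simp only []
          omega
  have step1 : ∀ ν : Fin (k + 2) → Fin n,
      (∑ ρ : Fin n, ∑ τ : Fin n,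
        η ρ * η τ * C ρ τ (ν (σ ⟨0, by omega⟩)) (ν (σ ⟨1, by omega⟩)) *
          (if ν = (fun j : Fin (k + 2) => if h : (j : ℕ) < k then ν (σ ⟨(j : ℕ) + 2, by omega⟩)
              else if (j : ℕ) = k then ρ else τ) then 1 else 0))
      = if (∀ i j, relA α ⟨k, by omega⟩ ⟨k + 1, by omega⟩ i j → ν i = ν j) then
          η (ν ⟨k, by omega⟩) * η (ν ⟨k + 1, by omega⟩) *
            C (ν ⟨k, by omega⟩) (ν ⟨k + 1, by omega⟩) (ν (α ⟨k, by omega⟩)) (ν (α ⟨k + 1, by omega⟩))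
        else 0 := by
    intro ν
    have hterm : ∀ ρ τ : Fin n,
        η ρ * η τ * C ρ τ (ν (σ ⟨0, by omega⟩)) (ν (σ ⟨1, by omega⟩)) *
          (if ν = (fun j : Fin (k + 2) => if h : (j : ℕ) < k then ν (σ ⟨(j : ℕ) + 2, by omega⟩)
              else if (j : ℕ) = k then ρ else τ) then 1 else 0)
        = if τ = ν ⟨k + 1, by omega⟩ then
            (if ρ = ν ⟨k, by omega⟩ then
              (if (∀ i j, relA α ⟨k, by omega⟩ ⟨k + 1, by omega⟩ i j → ν i = ν j) then
                η ρ * η τ * C ρ τ (ν (α ⟨k, by omega⟩)) (ν (α ⟨k + 1, by omega⟩)) else 0) else 0)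
          else 0 := by
      intro ρ τ
      by_cases h2 : τ = ν ⟨k + 1, by omega⟩
      · by_cases h1 : ρ = ν ⟨k, by omega⟩
        · by_cases hcnd : (∀ i j, relA α ⟨k, by omega⟩ ⟨k + 1, by omega⟩ i j → ν i = ν j)
          · simp only [if_pos h2, if_pos h1, if_pos hcnd,
              if_pos ((hiff ν ρ τ).2 ⟨hcnd, h1, h2⟩), mul_one, hα0, hα1]
          · simp only [if_pos h2, if_pos h1, if_neg hcnd,
              if_neg (fun hf => hcnd ((hiff ν ρ τ).1 hf).1), mul_zero]
        · simp only [if_pos h2, if_neg h1,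
            if_neg (fun hf => h1 ((hiff ν ρ τ).1 hf).2.1), mul_zero]
      · simp only [if_neg h2, if_neg (fun hf => h2 ((hiff ν ρ τ).1 hf).2.2), mul_zero]
    refine Eq.trans (Finset.sum_congr rfl fun ρ _ => Finset.sum_congr rfl fun τ _ => hterm ρ τ) ?_
    simp only [Finset.sum_ite_eq', Finset.mem_univ, if_true]
  refine Eq.trans (Finset.sum_congr rfl fun ν _ => step1 ν) ?_
  refine Eq.trans (Finset.sum_filter _ _).symm ?_
  exact key η C hC1 hC2 hC5 α ⟨k, by omega⟩ ⟨k + 1, by omega⟩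

end Statement4Aux

set_option maxHeartbeats 1000000 in
/-- for a tensor `C` with the symmetries of a Weyl tensor on an
`n`-dimensional inner product space and `2 ≤ p ≤ n - 2` (`p = k + 2`), the trace of the
induced linear operator `C_p` on `p`-forms vanishes. -/
theorem statement4 (n k : ℕ) (hp : k + 2 + 2 ≤ n)
    (η : Fin n → ℝ) (hη : ∀ i, η i = 1 ∨ η i = -1)
    (C : Fin n → Fin n → Fin n → Fin n → ℝ)
    (hC1 : ∀ a b c d, C a b c d = - C b a c d)
    (hC2 : ∀ a b c d, C a b c d = - C a b d c)
    (hC3 : ∀ a b c d, C a b c d = C c d a b)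
    (hC4 : ∀ a b c d, C a b c d + C a c d b + C a d b c = 0)
    (hC5 : ∀ b d, ∑ a, η a * C a b a d = 0) :
    LinearMap.trace ℝ ((Fin (k + 2) → Fin n) → ℝ)
      (Matrix.mulVecLin (weylMat η C k)) = 0 := by
  
  have htr : LinearMap.trace ℝ ((Fin (k + 2) → Fin n) → ℝ) (Matrix.mulVecLin (weylMat η C k))
      = Matrix.trace (weylMat η C k) := by
    rw [LinearMap.trace_eq_matrix_trace ℝ (Pi.basisFun ℝ _), LinearMap.toMatrix_eq_toMatrix',
      ← Matrix.toLin'_apply', LinearMap.toMatrix'_toLin']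
  rw [htr, Matrix.trace]
  simp only [Matrix.diag_apply, weylMat]
  rw [← Finset.mul_sum]
  refine mul_eq_zero_of_right _ ?_
  rw [Finset.sum_comm]
  refine Finset.sum_eq_zero fun σ _ => ?_
  rw [← Finset.mul_sum]
  exact mul_eq_zero_of_right _ (Statement4Aux.per_sigma η C hC1 hC2 hC5 σ)
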